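/- Let β ∈ [1/2, 1], σ > 1, λ ≥ 0, and p(μ,η) = −μ² + η² − 2iσ(βμ − η) − (1−β²)σ² + λ, with p̃ as the ℓ²-norm of p together with all its partial derivatives in (μ,η). If λ ≥ 2(|μ| + σ)², then p̃(μ,η) ≥ λ/2 ≥ c√λ for some constant c > 0 independent of λ, σ, μ, η; and if λ < 2(|μ| + σ)², then p̃(μ,η) ≥ √λ/√2. In particular √λ / p̃(μ,η) is bounded uniformly in (μ,η,σ,λ). -/

import Mathlib

open Complex

/-- The symbol of the conjugated operator. -/
noncomputable def symbP (β σ lam : ℝ) (μ η : ℝ) : ℂ :=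
  -(μ:ℂ)^2 + (η:ℂ)^2 - 2 * Complex.I * σ * ((β:ℂ) * μ - η) - (1 - (β:ℂ)^2) * σ^2 + lam

/-- The weight `p̃`, the ℓ²-norm of `p` and its partial derivatives up to order two. -/
noncomputable def symbPTilde (β σ lam : ℝ) (μ η : ℝ) : ℝ :=
  Real.sqrt (‖symbP β σ lam μ η‖^2
    + ‖deriv (fun μ' => symbP β σ lam μ' η) μ‖^2
    + ‖deriv (fun η' => symbP β σ lam μ η') η‖^2
    + ‖deriv (deriv (fun μ' => symbP β σ lam μ' η)) μ‖^2
    + ‖deriv (deriv (fun η' => symbP β σ lam μ η')) η‖^2)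

lemma hD_mu (β σ lam η μ : ℝ) :
    HasDerivAt (fun μ' => symbP β σ lam μ' η) (-2*(μ:ℂ) - 2*Complex.I*σ*β) μ := by
  have h : HasDerivAt (fun z : ℂ =>
      -z^2 + (η:ℂ)^2 - 2 * Complex.I * σ * ((β:ℂ) * z - η) - (1 - (β:ℂ)^2) * σ^2 + lam)
      (-2*(μ:ℂ) - 2*Complex.I*σ*β) μ := by
    have h1 : HasDerivAt (fun z : ℂ => z^2) (2*(μ:ℂ)) μ := by
      simpa using hasDerivAt_pow 2 (μ:ℂ)
    have h2 : HasDerivAt (fun z : ℂ => 2 * Complex.I * σ * ((β:ℂ) * z - η))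
        (2 * Complex.I * σ * β) μ := by
      have := (((hasDerivAt_id (μ:ℂ)).const_mul (β:ℂ)).sub_const (η:ℂ)).const_mul
        (2 * Complex.I * (σ:ℂ))
      simpa [mul_comm, mul_assoc] using this
    have := ((((h1.neg.add_const ((η:ℂ)^2)).sub h2).sub_const ((1 - (β:ℂ)^2) * σ^2)).add_const (lam:ℂ))
    refine this.congr_deriv ?_
    ring
  simpa [symbP] using h.comp_ofReal

lemma hD_eta (β σ lam μ η : ℝ) :
    HasDerivAt (fun η' => symbP β σ lam μ η') (2*(η:ℂ) + 2*Complex.I*σ) η := by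
  have h : HasDerivAt (fun z : ℂ =>
      -(μ:ℂ)^2 + z^2 - 2 * Complex.I * σ * ((β:ℂ) * μ - z) - (1 - (β:ℂ)^2) * σ^2 + lam)
      (2*(η:ℂ) + 2*Complex.I*σ) η := by
    have h1 : HasDerivAt (fun z : ℂ => z^2) (2*(η:ℂ)) η := by
      simpa using hasDerivAt_pow 2 (η:ℂ)
    have h2 : HasDerivAt (fun z : ℂ => 2 * Complex.I * σ * ((β:ℂ) * μ - z))
        (-(2 * Complex.I * σ)) η := by
      have := ((hasDerivAt_id (η:ℂ)).const_sub ((β:ℂ)*μ)).const_mul (2 * Complex.I * (σ:ℂ))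
      simpa using this
    have := ((((h1.const_add (-(μ:ℂ)^2)).sub h2).sub_const ((1 - (β:ℂ)^2) * σ^2)).add_const (lam:ℂ))
    refine this.congr_deriv ?_
    ring
  simpa [symbP] using h.comp_ofReal

lemma deriv_mu (β σ lam η : ℝ) :
    deriv (fun μ' => symbP β σ lam μ' η) = fun μ : ℝ => -2*(μ:ℂ) - 2*Complex.I*σ*β := by
  funext μ; exact (hD_mu β σ lam η μ).deriv

lemma deriv_eta (β σ lam μ : ℝ) :
    deriv (fun η' => symbP β σ lam μ η') = fun η : ℝ => 2*(η:ℂ) + 2*Complex.I*σ := by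
  funext η; exact (hD_eta β σ lam μ η).deriv

lemma deriv2_mu (β σ lam η μ : ℝ) :
    deriv (deriv (fun μ' => symbP β σ lam μ' η)) μ = -2 := by
  rw [deriv_mu]
  have h : HasDerivAt (fun z : ℂ => -2*z - 2*Complex.I*σ*β) (-2) μ := by
    simpa using ((hasDerivAt_id (μ:ℂ)).const_mul (-2:ℂ)).sub_const (2*Complex.I*σ*β)
  exact h.comp_ofReal.deriv

lemma deriv2_eta (β σ lam μ η : ℝ) :
    deriv (deriv (fun η' => symbP β σ lam μ η')) η = 2 := by
  rw [deriv_eta]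
  have h : HasDerivAt (fun z : ℂ => 2*z + 2*Complex.I*σ) (2) η := by
    simpa using ((hasDerivAt_id (η:ℂ)).const_mul (2:ℂ)).add_const (2*Complex.I*σ)
  exact h.comp_ofReal.deriv

-- norm computations
example (β σ μ : ℝ) : ‖(-2*(μ:ℂ) - 2*Complex.I*σ*β)‖^2 = 4*μ^2 + 4*σ^2*β^2 := by
  rw [Complex.sq_norm, Complex.normSq_apply]
  simp
  ring

lemma normsq_dmu (β σ μ : ℝ) : ‖(-2*(μ:ℂ) - 2*Complex.I*σ*β)‖^2 = 4*μ^2 + 4*σ^2*β^2 := by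
  rw [Complex.sq_norm, Complex.normSq_apply]
  simp
  ring

lemma normsq_deta (σ η : ℝ) : ‖(2*(η:ℂ) + 2*Complex.I*σ)‖^2 = 4*η^2 + 4*σ^2 := by
  rw [Complex.sq_norm, Complex.normSq_apply]
  simp
  ring

lemma re_symbP (β σ lam μ η : ℝ) :
    (symbP β σ lam μ η).re = -μ^2 + η^2 - (1-β^2)*σ^2 + lam := by
  simp [symbP, ← Complex.ofReal_pow]

lemma tilde_eq (β σ lam μ η : ℝ) :
    symbPTilde β σ lam μ η
      = Real.sqrt (‖symbP β σ lam μ η‖^2 + (4*μ^2 + 4*σ^2*β^2) + (4*η^2 + 4*σ^2) + 4 + 4) := by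
  unfold symbPTilde
  rw [deriv2_mu, deriv2_eta, (hD_mu β σ lam η μ).deriv,
    (hD_eta β σ lam μ η).deriv, normsq_dmu, normsq_deta]
  norm_num

theorem symbol_weight_case_bounds :
    ∃ c > (0:ℝ), ∃ C > (0:ℝ), ∀ β σ lam μ η : ℝ,
      β ∈ Set.Icc (1/2 : ℝ) 1 → 1 < σ → 0 ≤ lam →
      ((2 * (|μ| + σ)^2 ≤ lam →
          lam / 2 ≤ symbPTilde β σ lam μ η ∧ c * Real.sqrt lam ≤ lam / 2)
        ∧ (lam < 2 * (|μ| + σ)^2 →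
          Real.sqrt lam / Real.sqrt 2 ≤ symbPTilde β σ lam μ η)
        ∧ Real.sqrt lam ≤ C * symbPTilde β σ lam μ η) := by
  refine ⟨Real.sqrt 2 / 2, by positivity, Real.sqrt 2, by positivity, ?_⟩
  intro β σ lam μ η hβ hσ hlam
  obtain ⟨hβ1, hβ2⟩ := hβ
  have hσ0 : (0:ℝ) < σ := by linarith
  have habs : |μ|^2 = μ^2 := sq_abs μ
  have hμ0 : 0 ≤ |μ| := abs_nonneg μ
  have hs2 : Real.sqrt 2 * Real.sqrt 2 = 2 := Real.mul_self_sqrt (by norm_num)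
  have hsl : Real.sqrt lam * Real.sqrt lam = lam := Real.mul_self_sqrt hlam
  have hsl0 : 0 ≤ Real.sqrt lam := Real.sqrt_nonneg lam
  have hnp : 0 ≤ ‖symbP β σ lam μ η‖ := norm_nonneg _
  rw [tilde_eq]
  set N := ‖symbP β σ lam μ η‖ with hN
  -- case 1 statement
  have case1 : 2 * (|μ| + σ)^2 ≤ lam →
      lam / 2 ≤ Real.sqrt (N^2 + (4*μ^2 + 4*σ^2*β^2) + (4*η^2 + 4*σ^2) + 4 + 4)
      ∧ Real.sqrt 2 / 2 * Real.sqrt lam ≤ lam / 2 := by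
    intro h1
    have hre : lam / 2 ≤ (symbP β σ lam μ η).re := by
      rw [re_symbP]
      nlinarith [sq_nonneg η, sq_nonneg β, sq_nonneg σ, sq_nonneg (|μ| + σ), mul_pos hσ0 hσ0]
    have hNge : lam / 2 ≤ N := by
      calc lam / 2 ≤ |(symbP β σ lam μ η).re| := le_trans hre (le_abs_self _)
        _ ≤ N := by rw [hN]; exact Complex.abs_re_le_norm _
    constructor
    · calc lam / 2 ≤ N := hNge
        _ = Real.sqrt (N^2) := (Real.sqrt_sq hnp).symm
        _ ≤ _ := Real.sqrt_le_sqrt (by nlinarith [sq_nonneg μ, sq_nonneg η, sq_nonneg (σ*β)])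
    · -- lam ≥ 2 since lam ≥ 2σ² ≥ 2
      have hlam2 : (2:ℝ) ≤ lam := by nlinarith
      have : Real.sqrt 2 ≤ Real.sqrt lam := Real.sqrt_le_sqrt hlam2
      nlinarith [Real.sqrt_nonneg 2]
  have case2 : lam < 2 * (|μ| + σ)^2 →
      Real.sqrt lam / Real.sqrt 2 ≤
        Real.sqrt (N^2 + (4*μ^2 + 4*σ^2*β^2) + (4*η^2 + 4*σ^2) + 4 + 4) := by
    intro h2
    have : Real.sqrt lam / Real.sqrt 2 = Real.sqrt (lam / 2) := by
      rw [Real.sqrt_div hlam]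
    rw [this]
    apply Real.sqrt_le_sqrt
    nlinarith [sq_nonneg N, sq_nonneg η, sq_nonneg (σ*β), sq_nonneg (|μ| - σ)]
  refine ⟨case1, case2, ?_⟩
  by_cases h : 2 * (|μ| + σ)^2 ≤ lam
  · obtain ⟨ha, hb⟩ := case1 h
    nlinarith [Real.sqrt_nonneg 2, Real.sqrt_nonneg (N^2 + (4*μ^2 + 4*σ^2*β^2) + (4*η^2 + 4*σ^2) + 4 + 4)]
  · have hc := case2 (not_le.1 h)
    have hs20 : 0 < Real.sqrt 2 := by positivity
    calc Real.sqrt lam = Real.sqrt 2 * (Real.sqrt lam / Real.sqrt 2) := by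
          field_simp
      _ ≤ Real.sqrt 2 * _ := by
          exact mul_le_mul_of_nonneg_left hc (le_of_lt hs20)
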